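/- Let 0 < q ≤ 1 and α > 0. Let J(k,ℓ) ∈ {0,1} for k ∈ [r], ℓ ∈ [s] be random variables such that E[J(k,ℓ)] ≥ αq for all k,ℓ; E[J(k,ℓ)J(k,ℓ')] ≤ q² whenever ℓ ≠ ℓ'; E[J(k,ℓ)J(k',ℓ)] ≤ q² whenever k ≠ k'; and J(k,ℓ) is independent of J(k',ℓ') whenever k ≠ k' and ℓ ≠ ℓ'. Let Z = Σ_{k,ℓ} J(k,ℓ). Then Pr{Z = 0} ≤ 1/(αrsq) + (r+s)/(α²rs). -/

import Mathlib

open Finset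

/-- One-shot mutual covering lemma: on a finite probability space `(Ω, w)`,
`0/1`-valued random variables `J k ℓ` with mean at least `α q`, pairwise
second moments at most `q²` along shared rows/columns, and independence
across distinct rows and columns, satisfy
`Pr{∑ J = 0} ≤ 1/(α r s q) + (r+s)/(α² r s)`. -/
theorem mutual_covering_lemma
    {Ω : Type*} [Fintype Ω] (w : Ω → ℝ)
    (hw0 : ∀ ω, 0 ≤ w ω) (hw1 : ∑ ω, w ω = 1)
    (r s : ℕ) (hr : 0 < r) (hs : 0 < s)
    (q α : ℝ) (hq0 : 0 < q) (hq1 : q ≤ 1) (hα : 0 < α)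
    (J : Fin r → Fin s → Ω → ℝ)
    (hJ01 : ∀ k ℓ ω, J k ℓ ω = 0 ∨ J k ℓ ω = 1)
    (hmean : ∀ k ℓ, α * q ≤ ∑ ω, w ω * J k ℓ ω)
    (hrow : ∀ k ℓ ℓ', ℓ ≠ ℓ' → ∑ ω, w ω * (J k ℓ ω * J k ℓ' ω) ≤ q ^ 2)
    (hcol : ∀ k k' ℓ, k ≠ k' → ∑ ω, w ω * (J k ℓ ω * J k' ℓ ω) ≤ q ^ 2)
    (hind : ∀ k k' ℓ ℓ', k ≠ k' → ℓ ≠ ℓ' →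
      ∑ ω, w ω * (J k ℓ ω * J k' ℓ' ω)
        = (∑ ω, w ω * J k ℓ ω) * (∑ ω, w ω * J k' ℓ' ω)) :
    ∑ ω ∈ univ.filter (fun ω => (∑ k, ∑ ℓ, J k ℓ ω) = 0), w ω
      ≤ 1 / (α * r * s * q) + (r + s) / (α ^ 2 * r * s) := by
  classical
  have hq2 : (0:ℝ) ≤ q ^ 2 := sq_nonneg q
  have hJnn : ∀ k ℓ ω, 0 ≤ J k ℓ ω := fun k ℓ ω => by
    rcases hJ01 k ℓ ω with h | h <;> simp [h]
  set μf : Fin r → Fin s → ℝ := fun k ℓ => ∑ ω, w ω * J k ℓ ω with hμf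
  have hμfnn : ∀ k ℓ, 0 ≤ μf k ℓ := fun k ℓ =>
    Finset.sum_nonneg fun ω _ => mul_nonneg (hw0 ω) (hJnn k ℓ ω)
  set μ : ℝ := ∑ k, ∑ ℓ, μf k ℓ with hμ
  have hrr : (0:ℝ) < r := by exact_mod_cast hr
  have hss : (0:ℝ) < s := by exact_mod_cast hs
  have hμlb : α * q * (r * s) ≤ μ := by
    calc α * q * (r * s) = ∑ _k : Fin r, ∑ _ℓ : Fin s, α * q := by
          simp [Finset.sum_const, Finset.card_univ]; ring
      _ ≤ μ := Finset.sum_le_sum fun k _ => Finset.sum_le_sum fun ℓ _ => hmean k ℓ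
  have hμpos : 0 < μ := lt_of_lt_of_le (by positivity) hμlb
  set Z : Ω → ℝ := fun ω => ∑ k, ∑ ℓ, J k ℓ ω with hZ
  set P : ℝ := ∑ ω ∈ univ.filter (fun ω => Z ω = 0), w ω with hP
  -- Chebyshev
  have cheb : P * μ ^ 2 ≤ ∑ ω, w ω * (Z ω - μ) ^ 2 := by
    calc P * μ ^ 2 = ∑ ω ∈ univ.filter (fun ω => Z ω = 0), w ω * (Z ω - μ) ^ 2 := by
          rw [hP, Finset.sum_mul]
          refine Finset.sum_congr rfl fun ω hω => ?_
          have h0 : Z ω = 0 := (Finset.mem_filter.mp hω).2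
          rw [h0]; ring
      _ ≤ ∑ ω, w ω * (Z ω - μ) ^ 2 :=
          Finset.sum_le_sum_of_subset_of_nonneg (Finset.filter_subset _ _)
            (fun ω _ _ => mul_nonneg (hw0 ω) (sq_nonneg _))
  have hEZ : ∑ ω, w ω * Z ω = μ := by
    simp only [hZ, hμ, hμf, Finset.mul_sum]
    rw [Finset.sum_comm]
    exact Finset.sum_congr rfl fun k _ => Finset.sum_comm
  have hvar : ∑ ω, w ω * (Z ω - μ) ^ 2 = (∑ ω, w ω * (Z ω) ^ 2) - μ ^ 2 := by
    have he : ∀ ω ∈ (univ : Finset Ω),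
        w ω * (Z ω - μ) ^ 2 = w ω * Z ω ^ 2 - 2 * μ * (w ω * Z ω) + μ ^ 2 * w ω :=
      fun ω _ => by ring
    rw [Finset.sum_congr rfl he, Finset.sum_add_distrib, Finset.sum_sub_distrib,
      ← Finset.mul_sum, ← Finset.mul_sum, hEZ, hw1]
    ring
  have hZp : ∀ ω, Z ω = ∑ p : Fin r × Fin s, J p.1 p.2 ω := fun ω =>
    (Fintype.sum_prod_type (fun p : Fin r × Fin s => J p.1 p.2 ω)).symm
  have hμp : μ = ∑ p : Fin r × Fin s, μf p.1 p.2 :=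
    (Fintype.sum_prod_type (fun p : Fin r × Fin s => μf p.1 p.2)).symm
  have hZsq : ∑ ω, w ω * (Z ω) ^ 2
      = ∑ p : Fin r × Fin s, ∑ p' : Fin r × Fin s,
          ∑ ω, w ω * (J p.1 p.2 ω * J p'.1 p'.2 ω) := by
    calc ∑ ω, w ω * (Z ω) ^ 2
        = ∑ ω, ∑ p : Fin r × Fin s, ∑ p' : Fin r × Fin s,
            w ω * (J p.1 p.2 ω * J p'.1 p'.2 ω) := by
          refine Finset.sum_congr rfl fun ω _ => ?_
          rw [hZp, sq, Finset.sum_mul_sum]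
          simp [Finset.mul_sum]
      _ = _ := by
          rw [Finset.sum_comm]
          exact Finset.sum_congr rfl fun p _ => Finset.sum_comm
  have hμsq : μ ^ 2 = ∑ p : Fin r × Fin s, ∑ p' : Fin r × Fin s,
      μf p.1 p.2 * μf p'.1 p'.2 := by
    rw [hμp, sq, Finset.sum_mul_sum]
  -- termwise covariance bound
  have hterm : ∀ p p' : Fin r × Fin s,
      (∑ ω, w ω * (J p.1 p.2 ω * J p'.1 p'.2 ω)) - μf p.1 p.2 * μf p'.1 p'.2
      ≤ (if p = p' then μf p.1 p.2 else 0) + (if p.1 = p'.1 then q ^ 2 else 0)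
        + (if p.2 = p'.2 then q ^ 2 else 0) := by
    rintro ⟨k, ℓ⟩ ⟨k', ℓ'⟩
    by_cases hk : k = k' <;> by_cases hℓ : ℓ = ℓ'
    · subst hk; subst hℓ
      have hd : ∑ ω, w ω * (J k ℓ ω * J k ℓ ω) = μf k ℓ := by
        rw [hμf]
        refine Finset.sum_congr rfl fun ω _ => ?_
        rcases hJ01 k ℓ ω with h | h <;> simp [h]
      rw [hd]
      simp only [Prod.mk.injEq, and_self, if_true]
      nlinarith [sq_nonneg (μf k ℓ), hμfnn k ℓ]
    · subst hk
      have h1 := hrow k ℓ ℓ' hℓ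
      have h2 := mul_nonneg (hμfnn k ℓ) (hμfnn k ℓ')
      simp only [Prod.mk.injEq, hℓ, and_false, if_false, if_true, if_neg hℓ]
      simp only [hμf] at h1 h2 ⊢
      linarith
    · subst hℓ
      have h1 := hcol k k' ℓ hk
      have h2 := mul_nonneg (hμfnn k ℓ) (hμfnn k' ℓ)
      simp only [Prod.mk.injEq, hk, false_and, if_false, if_neg hk, if_true]
      simp only [hμf] at h1 h2 ⊢
      linarith
    · have h1 := hind k k' ℓ ℓ' hk hℓ
      simp only [Prod.mk.injEq, hk, hℓ, false_and, if_false, if_neg hk, if_neg hℓ]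
      simp only [hμf] at h1 ⊢
      rw [h1]; simp
  -- sum of the bound
  have hsum : (∑ p : Fin r × Fin s, ∑ p' : Fin r × Fin s,
      ((if p = p' then μf p.1 p.2 else 0) + (if p.1 = p'.1 then q ^ 2 else 0)
        + (if p.2 = p'.2 then q ^ 2 else 0)))
      = μ + q ^ 2 * (r * s * s) + q ^ 2 * (r * r * s) := by
    rw [Finset.sum_congr rfl fun p _ => Finset.sum_add_distrib]
    rw [Finset.sum_add_distrib]
    rw [Finset.sum_congr rfl fun (p : Fin r × Fin s) _ => Finset.sum_add_distrib]
    rw [Finset.sum_add_distrib]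
    congr 1
    · congr 1
      · rw [hμp]
        refine Finset.sum_congr rfl fun p _ => ?_
        simp [Finset.sum_ite_eq]
      · have hb : (∑ p : Fin r × Fin s, ∑ p' : Fin r × Fin s,
            if p.1 = p'.1 then q ^ 2 else 0)
            = ∑ k : Fin r, ∑ _ℓ : Fin s, ∑ k' : Fin r, ∑ _ℓ' : Fin s,
                if k = k' then q ^ 2 else 0 := by
          rw [Fintype.sum_prod_type]; simp_rw [Fintype.sum_prod_type]
        rw [hb]
        simp [Finset.sum_ite_eq, Finset.sum_const, Finset.card_univ]
        ring
    · have hb : (∑ p : Fin r × Fin s, ∑ p' : Fin r × Fin s,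
          if p.2 = p'.2 then q ^ 2 else 0)
          = ∑ _k : Fin r, ∑ ℓ : Fin s, ∑ _k' : Fin r, ∑ ℓ' : Fin s,
              if ℓ = ℓ' then q ^ 2 else 0 := by
        rw [Fintype.sum_prod_type]; simp_rw [Fintype.sum_prod_type]
      rw [hb]
      simp [Finset.sum_ite_eq, Finset.sum_const, Finset.card_univ]
      ring
  have main : P * μ ^ 2 ≤ μ + q ^ 2 * (r * s * (r + s)) := by
    calc P * μ ^ 2 ≤ ∑ ω, w ω * (Z ω - μ) ^ 2 := cheb
      _ = (∑ ω, w ω * (Z ω) ^ 2) - μ ^ 2 := hvar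
      _ = ∑ p : Fin r × Fin s, ∑ p' : Fin r × Fin s,
            ((∑ ω, w ω * (J p.1 p.2 ω * J p'.1 p'.2 ω)) - μf p.1 p.2 * μf p'.1 p'.2) := by
          rw [hZsq, hμsq, ← Finset.sum_sub_distrib]
          exact Finset.sum_congr rfl fun p _ => (Finset.sum_sub_distrib _ _).symm
      _ ≤ ∑ p : Fin r × Fin s, ∑ p' : Fin r × Fin s,
            ((if p = p' then μf p.1 p.2 else 0) + (if p.1 = p'.1 then q ^ 2 else 0)
              + (if p.2 = p'.2 then q ^ 2 else 0)) :=
          Finset.sum_le_sum fun p _ => Finset.sum_le_sum fun p' _ => hterm p p'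
      _ = μ + q ^ 2 * (r * s * s) + q ^ 2 * (r * r * s) := hsum
      _ = μ + q ^ 2 * (r * s * (r + s)) := by ring
  -- final arithmetic
  have hμsqpos : (0:ℝ) < μ ^ 2 := by positivity
  have hPle : P ≤ 1 / μ + q ^ 2 * (r * s * (r + s)) / μ ^ 2 := by
    rw [div_add_div _ _ (ne_of_gt hμpos) (ne_of_gt hμsqpos), le_div_iff₀ (by positivity)]
    calc P * (μ * μ ^ 2) = P * μ ^ 2 * μ := by ring
      _ ≤ (μ + q ^ 2 * (r * s * (r + s))) * μ :=
          mul_le_mul_of_nonneg_right main (le_of_lt hμpos)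
      _ = 1 * μ ^ 2 + μ * (q ^ 2 * (↑r * ↑s * (↑r + ↑s))) := by ring
  have h1 : 1 / μ ≤ 1 / (α * r * s * q) := by
    apply one_div_le_one_div_of_le (by positivity)
    calc α * ↑r * ↑s * q = α * q * (↑r * ↑s) := by ring
      _ ≤ μ := hμlb
  have h2 : q ^ 2 * (r * s * (r + s)) / μ ^ 2 ≤ (r + s) / (α ^ 2 * r * s) := by
    rw [div_le_div_iff₀ hμsqpos (by positivity)]
    have hsq : (α * q * (r * s)) ^ 2 ≤ μ ^ 2 := by
      apply pow_le_pow_left₀ (by positivity) hμlb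
    have hrs : (0:ℝ) ≤ (r : ℝ) + s := by positivity
    calc q ^ 2 * (↑r * ↑s * (↑r + ↑s)) * (α ^ 2 * ↑r * ↑s)
        = (↑r + ↑s) * (α * q * (↑r * ↑s)) ^ 2 := by ring
      _ ≤ (↑r + ↑s) * μ ^ 2 := mul_le_mul_of_nonneg_left hsq hrs
  calc P ≤ 1 / μ + q ^ 2 * (r * s * (r + s)) / μ ^ 2 := hPle
    _ ≤ 1 / (α * ↑r * ↑s * q) + (↑r + ↑s) / (α ^ 2 * ↑r * ↑s) := add_le_add h1 h2
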